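/- The function F(p) = Ψ(1+1/p) − Ψ(1+3/p) is strictly increasing on the interval (2,∞), where Ψ = (ln Γ)' is the Digamma function. -/

import Mathlib

open Real Set

/-- The Digamma function `Ψ = (ln Γ)'`. -/
noncomputable def digamma (x : ℝ) : ℝ := deriv (fun y => Real.log (Real.Gamma y)) x

namespace Stmt1Aux

open Filter Topology Finset

noncomputable def f : ℝ → ℝ := fun y => Real.log (Real.Gamma y)

lemma hder {x : ℝ} (hx : 0 < x) : DifferentiableAt ℝ f x := by
  refine (Real.differentiableAt_Gamma ?_).log (Real.Gamma_ne_zero ?_) <;>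
    exact fun m => ne_of_gt (lt_of_le_of_lt (by simp [neg_nonpos] : -(m : ℝ) ≤ 0) hx)

lemma hconv : ConvexOn ℝ (Ioi 0) f := Real.convexOn_log_Gamma

lemma f_rec {x : ℝ} (hx : 0 < x) : f (x + 1) = f x + Real.log x := by
  simp only [f, Real.Gamma_add_one hx.ne',
    Real.log_mul hx.ne' (Real.Gamma_pos_of_pos hx).ne', add_comm]

lemma deriv_rec {x : ℝ} (hx : 0 < x) : deriv f (x + 1) = deriv f x + 1 / x := by
  rw [← deriv_comp_add_const, one_div, ← Real.deriv_log,
    ← deriv_add (hder hx) (Real.differentiableAt_log hx.ne')]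
  apply Filter.EventuallyEq.deriv_eq
  filter_upwards [eventually_gt_nhds hx] with y hy
  exact f_rec hy

lemma deriv_shift {x : ℝ} (hx : 0 < x) (n : ℕ) :
    deriv f (x + n) = deriv f x + ∑ m ∈ Finset.range n, 1 / (x + m) := by
  induction n with
  | zero => simp
  | succ n ih =>
    have hxn : 0 < x + n := by positivity
    have h1 : x + ((n : ℕ) + 1 : ℕ) = (x + n) + 1 := by push_cast; ring
    rw [h1, deriv_rec hxn, ih, Finset.sum_range_succ]
    ring

lemma le_deriv {z : ℝ} (hz : 0 < z) : Real.log z ≤ deriv f (z + 1) := by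
  have h := hconv.slope_le_deriv (mem_Ioi.mpr hz)
    (mem_Ioi.mpr (by linarith : (0:ℝ) < z + 1)) (by linarith) (hder (by linarith))
  rwa [slope_def_field, add_sub_cancel_left, div_one, f_rec hz, add_sub_cancel_left] at h

lemma deriv_le {z : ℝ} (hz : 0 < z) : deriv f (z + 1) ≤ Real.log (z + 1) := by
  have h := hconv.deriv_le_slope (mem_Ioi.mpr (by linarith : (0:ℝ) < z + 1))
    (mem_Ioi.mpr (by linarith : (0:ℝ) < z + 2)) (by linarith) (hder (by linarith))
  have h2 : z + 2 = (z + 1) + 1 := by ring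
  rwa [slope_def_field, show z + 2 - (z + 1) = 1 by ring, div_one, h2,
    f_rec (by linarith : (0:ℝ) < z + 1), add_sub_cancel_left] at h

lemma tendsto_ratio (x y : ℝ) :
    Tendsto (fun n : ℕ => Real.log (x + n) - Real.log (y + n - 1)) atTop (𝓝 0) := by
  have h1 : Tendsto (fun n : ℕ => (x + n : ℝ)) atTop atTop :=
    tendsto_atTop_add_const_left _ _ tendsto_natCast_atTop_atTop
  have h2 : Tendsto (fun n : ℕ => (y + n - 1 : ℝ)) atTop atTop :=
    tendsto_atTop_add_const_right _ _ (tendsto_atTop_add_const_left _ _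
      tendsto_natCast_atTop_atTop)
  have hratio : Tendsto (fun n : ℕ => (x + n) / (y + n - 1)) atTop (𝓝 1) := by
    have hnum : Tendsto (fun n : ℕ => (x + n) / (y + n - 1)) atTop (𝓝 1) := by
      have heq : ∀ᶠ n : ℕ in atTop, 1 + (x - y + 1) / (y + n - 1)
          = (x + n) / (y + n - 1) := by
        filter_upwards [h2.eventually_gt_atTop 0] with n hn
        field_simp
        ring
      have := (tendsto_const_nhds (x := (x - y + 1 : ℝ))).div_atTop h2
      have h3 : Tendsto (fun n : ℕ => 1 + (x - y + 1) / (y + n - 1)) atTop (𝓝 (1 + 0)) :=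
        (tendsto_const_nhds).add this
      rw [add_zero] at h3
      exact h3.congr' heq
    exact hnum
  have := hratio.log one_ne_zero
  rw [Real.log_one] at this
  apply this.congr'
  filter_upwards [h1.eventually_gt_atTop 0, h2.eventually_gt_atTop 0] with n hn1 hn2
  rw [Real.log_div hn1.ne' hn2.ne']

lemma tendsto_deriv_diff {x y : ℝ} (hx : 0 < x) (hy : 0 < y) :
    Tendsto (fun n : ℕ => deriv f (x + n) - deriv f (y + n)) atTop (𝓝 0) := by
  have hlow := (tendsto_ratio y x).neg
  rw [neg_zero] at hlow
  apply tendsto_of_tendsto_of_tendsto_of_le_of_le' hlow (tendsto_ratio x y)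
  · filter_upwards [eventually_ge_atTop 1] with n hn
    have hn' : (1:ℝ) ≤ n := by exact_mod_cast hn
    have h1 : deriv f (y + n) ≤ Real.log (y + n) := by
      have := deriv_le (z := y + n - 1) (by linarith)
      simpa [show y + n - 1 + 1 = y + n by ring] using this
    have h2 : Real.log (x + n - 1) ≤ deriv f (x + n) := by
      have := le_deriv (z := x + n - 1) (by linarith)
      simpa [show x + n - 1 + 1 = x + n by ring] using this
    have : Real.log (x + n - 1) - Real.log (y + n) ≤ deriv f (x + n) - deriv f (y + n) := by
      linarith
    show -(Real.log (y + n) - Real.log (x + n - 1)) ≤ deriv f (x + n) - deriv f (y + n)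
    linarith
  · filter_upwards [eventually_ge_atTop 1] with n hn
    have hn' : (1:ℝ) ≤ n := by exact_mod_cast hn
    have h1 : deriv f (x + n) ≤ Real.log (x + n) := by
      have := deriv_le (z := x + n - 1) (by linarith)
      simpa [show x + n - 1 + 1 = x + n by ring] using this
    have h2 : Real.log (y + n - 1) ≤ deriv f (y + n) := by
      have := le_deriv (z := y + n - 1) (by linarith)
      simpa [show y + n - 1 + 1 = y + n by ring] using this
    linarith

/-- The key limit formula for a difference of digamma values. -/
lemma key {x y : ℝ} (hx : 0 < x) (hy : 0 < y) :
    Tendsto (fun n : ℕ => ∑ m ∈ Finset.range n, (1 / (y + m) - 1 / (x + m))) atTop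
      (𝓝 (deriv f x - deriv f y)) := by
  have heq : ∀ n : ℕ, ∑ m ∈ Finset.range n, (1 / (y + m) - 1 / (x + m))
      = (deriv f x - deriv f y) - (deriv f (x + n) - deriv f (y + n)) := by
    intro n
    rw [deriv_shift hx n, deriv_shift hy n, Finset.sum_sub_distrib]
    ring
  have := (tendsto_const_nhds (x := deriv f x - deriv f y)).sub (tendsto_deriv_diff hx hy)
  rw [sub_zero] at this
  exact this.congr (fun n => (heq n).symm)

lemma term_lt {p q : ℝ} (hp : 2 < p) (hq : 2 < q) (hpq : p < q) (m : ℕ) :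
    1 / (1 + 3 / p + m) - 1 / (1 + 1 / p + m) < 1 / (1 + 3 / q + m) - 1 / (1 + 1 / q + m) := by
  have hp0 : (0:ℝ) < p := by linarith
  have hq0 : (0:ℝ) < q := by linarith
  have hm : (0:ℝ) ≤ m := Nat.cast_nonneg m
  set k : ℝ := (m : ℝ) + 1 with hk
  have hk1 : (1:ℝ) ≤ k := by rw [hk]; linarith
  have hkp1 : (0:ℝ) < k * p + 1 := by positivity
  have hkp3 : (0:ℝ) < k * p + 3 := by positivity
  have hkq1 : (0:ℝ) < k * q + 1 := by positivity
  have hkq3 : (0:ℝ) < k * q + 3 := by positivity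
  have hrw : ∀ r : ℝ, 0 < r → 1 / (1 + 3 / r + m) - 1 / (1 + 1 / r + m)
      = -2 * r / ((k * r + 1) * (k * r + 3)) := by
    intro r hr
    have h1 : (0:ℝ) < k * r + 1 := by positivity
    have h3 : (0:ℝ) < k * r + 3 := by positivity
    have e1 : 1 + 3 / r + m = (k * r + 3) / r := by field_simp [hk]; try ring
    have e2 : 1 + 1 / r + m = (k * r + 1) / r := by field_simp [hk]; try ring
    rw [e1, e2, one_div_div, one_div_div]
    field_simp
    ring
  rw [hrw p hp0, hrw q hq0, div_lt_div_iff₀ (by positivity) (by positivity)]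
  have hpq4 : (4:ℝ) < p * q := by nlinarith
  have hkk : (1:ℝ) ≤ k * k := by nlinarith
  have hkey : (0:ℝ) < k * k * p * q - 3 := by
    have h5 : p * q ≤ k * k * (p * q) := le_mul_of_one_le_left (by positivity) hkk
    nlinarith
  nlinarith [mul_pos (sub_pos.mpr hpq) hkey]

end Stmt1Aux

theorem stmt1 :
    StrictMonoOn (fun p : ℝ => digamma (1 + 1 / p) - digamma (1 + 3 / p)) (Ioi 2) := by
  intro p hp q hq hpq
  rw [mem_Ioi] at hp hq
  have hp0 : (0:ℝ) < p := by linarith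
  have hq0 : (0:ℝ) < q := by linarith
  have hxp : (0:ℝ) < 1 + 1 / p := by positivity
  have hyp : (0:ℝ) < 1 + 3 / p := by positivity
  have hxq : (0:ℝ) < 1 + 1 / q := by positivity
  have hyq : (0:ℝ) < 1 + 3 / q := by positivity
  have hFp := Stmt1Aux.key hxp hyp
  have hFq := Stmt1Aux.key hxq hyq
  have hdiff := hFq.sub hFp
  set c : ℝ := (1 / (1 + 3 / q + 0) - 1 / (1 + 1 / q + 0))
    - (1 / (1 + 3 / p + 0) - 1 / (1 + 1 / p + 0)) with hc
  have hcpos : 0 < c := by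
    have h := Stmt1Aux.term_lt hp hq hpq 0
    push_cast at h
    rw [hc]
    linarith
  have hle : c ≤ (deriv Stmt1Aux.f (1 + 1 / q) - deriv Stmt1Aux.f (1 + 3 / q))
      - (deriv Stmt1Aux.f (1 + 1 / p) - deriv Stmt1Aux.f (1 + 3 / p)) := by
    apply ge_of_tendsto hdiff
    filter_upwards [Filter.eventually_ge_atTop 1] with n hn
    rw [← Finset.sum_sub_distrib]
    have h0 : (0 : ℕ) ∈ Finset.range n := Finset.mem_range.mpr hn
    refine le_trans (le_of_eq ?_) (Finset.single_le_sum (f := fun m : ℕ =>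
      (1 / (1 + 3 / q + m) - 1 / (1 + 1 / q + m))
        - (1 / (1 + 3 / p + m) - 1 / (1 + 1 / p + m))) ?_ h0)
    · push_cast; rw [hc]
    · intro i _
      exact sub_nonneg.mpr (Stmt1Aux.term_lt hp hq hpq i).le
  have hdig : ∀ x : ℝ, digamma x = deriv Stmt1Aux.f x := fun x => rfl
  show digamma (1 + 1 / p) - digamma (1 + 3 / p) < digamma (1 + 1 / q) - digamma (1 + 3 / q)
  rw [hdig, hdig, hdig, hdig]
  exact sub_pos.mp (lt_of_lt_of_le hcpos hle)
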